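/- Per-step constraint-violation inequality. Under the online ADMM–EKF iterations with convex differentiable f_k and proper convex g, with x⋆ = ν⋆, and assuming f_k(x_{k+1}) + g(ν_{k+1}) − (f_k(x⋆) + g(ν⋆)) ≥ −F for some F > 0, for every k: ‖x_{k+1} − ν_k‖² ≤ 2F/ρ + (1/ρ²)(‖w_k‖² − ‖w_{k+1}‖²) + (‖ν⋆ − ν_k‖² − ‖ν⋆ − ν_{k+1}‖²) + (η/ρ)(‖x⋆ − x_k‖²_{P_k⁻¹} − ‖x⋆ − x_{k+1}‖²_{P_k⁻¹} − ‖x_{k+1} − x_k‖²_{P_k⁻¹}). -/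

import Mathlib

open Finset Matrix
open scoped RealInnerProductSpace

/-- Action of a matrix on a Euclidean vector. -/
noncomputable def act {ι κ : Type*} [Fintype ι] [Fintype κ] (A : Matrix ι κ ℝ)
    (v : EuclideanSpace ℝ κ) : EuclideanSpace ℝ ι :=
  WithLp.toLp 2 (A.mulVec v)

/-- Weighted squared norm `‖v‖²_M = vᵀ M v`. -/
noncomputable def qnorm {ι : Type*} [Fintype ι] (M : Matrix ι ι ℝ)
    (v : EuclideanSpace ℝ ι) : ℝ :=
  ⟪v, act M v⟫

section Aux

variable {n : ℕ} (M : Matrix (Fin n) (Fin n) ℝ)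

lemma act_add' (u v : EuclideanSpace ℝ (Fin n)) : act M (u + v) = act M u + act M v := by
  ext i
  simp [act, Matrix.mulVec, dotProduct, PiLp.add_apply, mul_add, Finset.sum_add_distrib]

lemma act_smul' (t : ℝ) (v : EuclideanSpace ℝ (Fin n)) : act M (t • v) = t • act M v := by
  ext i
  simp [act, Matrix.mulVec, dotProduct, PiLp.smul_apply, Finset.mul_sum, smul_eq_mul]
  exact Finset.sum_congr rfl fun j _ => by ring

lemma act_sub' (u v : EuclideanSpace ℝ (Fin n)) : act M (u - v) = act M u - act M v := by
  ext i
  simp [act, Matrix.mulVec, dotProduct, PiLp.sub_apply, mul_sub, Finset.sum_sub_distrib]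

lemma act_neg' (v : EuclideanSpace ℝ (Fin n)) : act M (-v) = -act M v := by
  ext i
  simp [act, Matrix.mulVec, dotProduct, PiLp.neg_apply, Finset.sum_neg_distrib]

lemma Bsymm' (hM : Mᵀ = M) (u v : EuclideanSpace ℝ (Fin n)) :
    ⟪u, act M v⟫ = ⟪v, act M u⟫ := by
  have hij : ∀ i j, M j i = M i j := fun i j =>
    (Matrix.transpose_apply M i j).symm.trans (by rw [hM])
  simp only [act, PiLp.inner_apply, RCLike.inner_apply, conj_trivial, Matrix.mulVec,
    dotProduct, PiLp.toLp_apply, Finset.mul_sum, Finset.sum_mul]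
  rw [Finset.sum_comm]
  refine Finset.sum_congr rfl fun i _ => Finset.sum_congr rfl fun j _ => ?_
  rw [hij j i]; ring

lemma qnorm_neg' (v : EuclideanSpace ℝ (Fin n)) : qnorm M (-v) = qnorm M v := by
  simp [qnorm, act_neg']

lemma qnorm_nonneg' (hM : M.PosDef) (v : EuclideanSpace ℝ (Fin n)) : 0 ≤ qnorm M v := by
  have h := hM.posSemidef.dotProduct_mulVec_nonneg v.ofLp
  simpa [qnorm, act, PiLp.inner_apply, RCLike.inner_apply, conj_trivial,
    dotProduct, mul_comm] using h

lemma qnorm_comb' (hM : Mᵀ = M) (u v : EuclideanSpace ℝ (Fin n)) (t : ℝ) :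
    qnorm M ((1 - t) • u + t • v)
      = (1 - t) * qnorm M u + t * qnorm M v - t * (1 - t) * qnorm M (u - v) := by
  have hs := Bsymm' M hM u v
  simp only [qnorm, act_add', act_smul', act_sub', inner_add_left, inner_add_right,
    inner_sub_left, inner_sub_right, real_inner_smul_left, real_inner_smul_right, hs]
  ring

lemma norm_comb' {E : Type*} [NormedAddCommGroup E] [InnerProductSpace ℝ E]
    (u v : E) (t : ℝ) :
    ‖(1 - t) • u + t • v‖ ^ 2
      = (1 - t) * ‖u‖ ^ 2 + t * ‖v‖ ^ 2 - t * (1 - t) * ‖u - v‖ ^ 2 := by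
  simp only [← real_inner_self_eq_norm_sq]
  simp only [inner_add_left, inner_add_right, inner_sub_left, inner_sub_right,
    real_inner_smul_left, real_inner_smul_right, real_inner_comm u v]
  ring

lemma le_of_forall_t' (a b Q : ℝ) (hQ : 0 ≤ Q)
    (h : ∀ t : ℝ, 0 < t → t ≤ 1 → a ≤ b + t * Q) : a ≤ b := by
  rcases eq_or_lt_of_le hQ with h0 | h0
  · have := h 1 one_pos le_rfl
    rw [← h0] at this
    linarith
  · refine le_of_forall_pos_le_add fun ε hε => ?_
    have ht := h (min 1 (ε / Q)) (lt_min one_pos (by positivity)) (min_le_left _ _)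
    have hle : min 1 (ε / Q) * Q ≤ ε := by
      calc min 1 (ε / Q) * Q ≤ (ε / Q) * Q :=
            mul_le_mul_of_nonneg_right (min_le_right _ _) h0.le
        _ = ε := div_mul_cancel₀ _ h0.ne'
    linarith

end Aux

set_option maxHeartbeats 1000000 in
/-- Per-step constraint-violation inequality for the online ADMM–EKF iterations. -/
theorem per_step_constraint_violation {n : ℕ}
    -- convex differentiable losses with gradient `f'`
    (f : ℕ → EuclideanSpace ℝ (Fin n) → ℝ)
    (f' : ℕ → EuclideanSpace ℝ (Fin n) → EuclideanSpace ℝ (Fin n))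
    (hconv : ∀ k, ConvexOn ℝ Set.univ (f k))
    (hgrad : ∀ k z, HasGradientAt (f k) (f' k z) z)
    -- proper convex regularizer
    (g : EuclideanSpace ℝ (Fin n) → ℝ) (hg : ConvexOn ℝ Set.univ g)
    -- the (inverses of the) covariance matrices
    (Pinv : ℕ → Matrix (Fin n) (Fin n) ℝ) (hP : ∀ k, (Pinv k).PosDef)
    (ρ η : ℝ) (hρ : 0 < ρ) (hη : 0 < η)
    -- the online ADMM–EKF iterates
    (x ν w : ℕ → EuclideanSpace ℝ (Fin n))
    (hν0 : ν 0 = x 0) (hw0 : w 0 = 0)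
    (hxup : ∀ k, ∀ z : EuclideanSpace ℝ (Fin n),
      f k (x (k + 1)) + ⟪w k, x (k + 1) - ν k⟫ + ρ / 2 * ‖x (k + 1) - ν k‖ ^ 2
          + η / 2 * qnorm (Pinv k) (x (k + 1) - x k)
        ≤ f k z + ⟪w k, z - ν k⟫ + ρ / 2 * ‖z - ν k‖ ^ 2
          + η / 2 * qnorm (Pinv k) (z - x k))
    (hνup : ∀ k, ∀ z : EuclideanSpace ℝ (Fin n),
      g (ν (k + 1)) + ⟪w k, x (k + 1) - ν (k + 1)⟫ + ρ / 2 * ‖x (k + 1) - ν (k + 1)‖ ^ 2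
        ≤ g z + ⟪w k, x (k + 1) - z⟫ + ρ / 2 * ‖x (k + 1) - z‖ ^ 2)
    (hwup : ∀ k, w (k + 1) = w k + ρ • (x (k + 1) - ν (k + 1)))
    -- best solution in hindsight
    (xs νs : EuclideanSpace ℝ (Fin n)) (hfeas : xs = νs)
    -- assumption A1.d
    (F : ℝ) (hF : 0 < F)
    (hA1d : ∀ k, -F ≤ f k (x (k + 1)) + g (ν (k + 1)) - (f k xs + g νs)) :
    ∀ k : ℕ,
      ‖x (k + 1) - ν k‖ ^ 2
        ≤ 2 * F / ρ + 1 / ρ ^ 2 * (‖w k‖ ^ 2 - ‖w (k + 1)‖ ^ 2)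
          + (‖νs - ν k‖ ^ 2 - ‖νs - ν (k + 1)‖ ^ 2)
          + η / ρ * (qnorm (Pinv k) (xs - x k) - qnorm (Pinv k) (xs - x (k + 1))
              - qnorm (Pinv k) (x (k + 1) - x k)) := by
  subst hfeas
  intro k
  set M := Pinv k with hMdef
  have hMsym : Mᵀ = M := by
    rw [← Matrix.conjTranspose_eq_transpose_of_trivial]; exact (hP k).1
  have hq : ∀ v, 0 ≤ qnorm M v := qnorm_nonneg' M (hP k)
  set a := x (k + 1) with ha
  set xk := x k with hxk
  set nk := ν k with hnk
  set n1 := ν (k + 1) with hn1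
  -- strengthened x-update inequality at z = xs
  have hx' : f k a + ⟪w k, a - nk⟫ + ρ / 2 * ‖a - nk‖ ^ 2 + η / 2 * qnorm M (a - xk)
        + (ρ / 2 * ‖xs - a‖ ^ 2 + η / 2 * qnorm M (xs - a))
      ≤ f k xs + ⟪w k, xs - nk⟫ + ρ / 2 * ‖xs - nk‖ ^ 2 + η / 2 * qnorm M (xs - xk) := by
    refine le_of_forall_t' _ _ (ρ / 2 * ‖xs - a‖ ^ 2 + η / 2 * qnorm M (xs - a))
      (add_nonneg (by positivity) (mul_nonneg (by positivity) (hq _))) fun t ht ht1 => ?_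
    have h1 := hxup k ((1 - t) • a + t • xs)
    have hf : f k ((1 - t) • a + t • xs) ≤ (1 - t) * f k a + t * f k xs :=
      (hconv k).2 (Set.mem_univ a) (Set.mem_univ xs) (by linarith) ht.le (by ring)
    have hzc : ∀ c : EuclideanSpace ℝ (Fin n),
        ((1 - t) • a + t • xs) - c = (1 - t) • (a - c) + t • (xs - c) := fun c => by module
    have hlin : ⟪w k, ((1 - t) • a + t • xs) - nk⟫
        = (1 - t) * ⟪w k, a - nk⟫ + t * ⟪w k, xs - nk⟫ := by
      rw [hzc nk, inner_add_right, real_inner_smul_right, real_inner_smul_right]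
    have hn : ‖((1 - t) • a + t • xs) - nk‖ ^ 2
        = (1 - t) * ‖a - nk‖ ^ 2 + t * ‖xs - nk‖ ^ 2 - t * (1 - t) * ‖xs - a‖ ^ 2 := by
      rw [hzc nk, norm_comb', show (a - nk) - (xs - nk) = -(xs - a) from by abel, norm_neg]
    have hqz : qnorm M (((1 - t) • a + t • xs) - xk)
        = (1 - t) * qnorm M (a - xk) + t * qnorm M (xs - xk) - t * (1 - t) * qnorm M (xs - a) := by
      rw [hzc xk, qnorm_comb' M hMsym,
        show (a - xk) - (xs - xk) = -(xs - a) from by abel, qnorm_neg']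
    rw [hlin, hn, hqz] at h1
    have H2 : t * (f k a + ⟪w k, a - nk⟫ + ρ / 2 * ‖a - nk‖ ^ 2 + η / 2 * qnorm M (a - xk)
          + (ρ / 2 * ‖xs - a‖ ^ 2 + η / 2 * qnorm M (xs - a)))
        ≤ t * (f k xs + ⟪w k, xs - nk⟫ + ρ / 2 * ‖xs - nk‖ ^ 2 + η / 2 * qnorm M (xs - xk)
          + t * (ρ / 2 * ‖xs - a‖ ^ 2 + η / 2 * qnorm M (xs - a))) := by
      nlinarith [h1, hf]
    exact (mul_le_mul_iff_right₀ ht).mp H2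
  -- strengthened ν-update inequality at z = νs = xs
  have hν' : g n1 + ⟪w k, a - n1⟫ + ρ / 2 * ‖a - n1‖ ^ 2 + ρ / 2 * ‖xs - n1‖ ^ 2
      ≤ g xs + ⟪w k, a - xs⟫ + ρ / 2 * ‖a - xs‖ ^ 2 := by
    refine le_of_forall_t' _ _ (ρ / 2 * ‖xs - n1‖ ^ 2) (by positivity) fun t ht ht1 => ?_
    have h1 := hνup k ((1 - t) • n1 + t • xs)
    have hgc : g ((1 - t) • n1 + t • xs) ≤ (1 - t) * g n1 + t * g xs :=
      hg.2 (Set.mem_univ n1) (Set.mem_univ xs) (by linarith) ht.le (by ring)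
    have hzc : a - ((1 - t) • n1 + t • xs) = (1 - t) • (a - n1) + t • (a - xs) := by module
    have hlin : ⟪w k, a - ((1 - t) • n1 + t • xs)⟫
        = (1 - t) * ⟪w k, a - n1⟫ + t * ⟪w k, a - xs⟫ := by
      rw [hzc, inner_add_right, real_inner_smul_right, real_inner_smul_right]
    have hn : ‖a - ((1 - t) • n1 + t • xs)‖ ^ 2
        = (1 - t) * ‖a - n1‖ ^ 2 + t * ‖a - xs‖ ^ 2 - t * (1 - t) * ‖xs - n1‖ ^ 2 := by
      rw [hzc, norm_comb', show (a - n1) - (a - xs) = xs - n1 from by abel]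
    rw [hlin, hn] at h1
    have H2 : t * (g n1 + ⟪w k, a - n1⟫ + ρ / 2 * ‖a - n1‖ ^ 2 + ρ / 2 * ‖xs - n1‖ ^ 2)
        ≤ t * (g xs + ⟪w k, a - xs⟫ + ρ / 2 * ‖a - xs‖ ^ 2 + t * (ρ / 2 * ‖xs - n1‖ ^ 2)) := by
      nlinarith [h1, hgc]
    have := (mul_le_mul_iff_right₀ ht).mp H2
    linarith
  -- dual-update identity
  have hwid : 2 * ρ * ⟪w k, a - n1⟫ + ρ ^ 2 * ‖a - n1‖ ^ 2
      = ‖w (k + 1)‖ ^ 2 - ‖w k‖ ^ 2 := by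
    rw [hwup k]
    have hexp : ‖w k + ρ • (a - n1)‖ ^ 2
        = ‖w k‖ ^ 2 + 2 * ρ * ⟪w k, a - n1⟫ + ρ ^ 2 * ‖a - n1‖ ^ 2 := by
      rw [norm_add_sq_real, real_inner_smul_right, norm_smul]
      simp [abs_of_pos hρ]
      ring
    rw [hexp]; ring
  have e1 : ⟪w k, xs - nk⟫ + ⟪w k, a - xs⟫ = ⟪w k, a - nk⟫ := by
    rw [← inner_add_right, show (xs - nk) + (a - xs) = a - nk from by abel]
  have e2 : ‖xs - a‖ ^ 2 = ‖a - xs‖ ^ 2 := by rw [norm_sub_rev]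
  have hA := hA1d k
  rw [← ha, ← hn1] at hA
  have C : ρ / 2 * ‖a - nk‖ ^ 2 + η / 2 * qnorm M (a - xk) + η / 2 * qnorm M (xs - a)
        + ⟪w k, a - n1⟫ + ρ / 2 * ‖a - n1‖ ^ 2 + ρ / 2 * ‖xs - n1‖ ^ 2
      ≤ F + ρ / 2 * ‖xs - nk‖ ^ 2 + η / 2 * qnorm M (xs - xk) := by
    nlinarith [hx', hν', hA, e1, e2, add_le_add hx' hν']
  have h2 : (0 : ℝ) < ρ ^ 2 := by positivity
  refine (mul_le_mul_iff_right₀ h2).mp ?_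
  have hR : ρ ^ 2 * (2 * F / ρ + 1 / ρ ^ 2 * (‖w k‖ ^ 2 - ‖w (k + 1)‖ ^ 2)
        + (‖xs - nk‖ ^ 2 - ‖xs - n1‖ ^ 2)
        + η / ρ * (qnorm M (xs - xk) - qnorm M (xs - a) - qnorm M (a - xk)))
      = 2 * F * ρ + (‖w k‖ ^ 2 - ‖w (k + 1)‖ ^ 2)
        + ρ ^ 2 * (‖xs - nk‖ ^ 2 - ‖xs - n1‖ ^ 2)
        + ρ * η * (qnorm M (xs - xk) - qnorm M (xs - a) - qnorm M (a - xk)) := by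
    field_simp
  rw [hR]
  have C2 := mul_le_mul_of_nonneg_left C (by positivity : (0 : ℝ) ≤ 2 * ρ)
  nlinarith [C2, hwid]
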